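/- arXiv:2010.01483 — 7 statements merged into one kernel-verified Lean document; each statement's English description precedes it below -/
import Mathlib

section
/- Let θ > 0, t₀ ∈ ℝ and T > t₀. Suppose ψ : ℝ → ℝ is twice differentiable at every point of [t₀, T], satisfies ψ(t) > 0 for all t ∈ [t₀, T], ψ''(t)·ψ(t) − (1+θ)·(ψ'(t))² ≥ 0 for all t ∈ [t₀, T], and ψ'(t₀) > 0. Then T < t₀ + ψ(t₀)/(θ·ψ'(t₀)). -/
/-- Classical concavity (Levine-type) blow-up lemma. -/
theorem concavity_blowup_lemma (θ t₀ T : ℝ) (hθ : 0 < θ) (hT : t₀ < T) (ψ : ℝ → ℝ)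
    (hψ : ∀ t ∈ Set.Icc t₀ T, DifferentiableAt ℝ ψ t)
    (hψ' : ∀ t ∈ Set.Icc t₀ T, DifferentiableAt ℝ (deriv ψ) t)
    (hpos : ∀ t ∈ Set.Icc t₀ T, 0 < ψ t)
    (hineq : ∀ t ∈ Set.Icc t₀ T,
      0 ≤ deriv (deriv ψ) t * ψ t - (1 + θ) * (deriv ψ t) ^ 2)
    (hψ'0 : 0 < deriv ψ t₀) :
    T < t₀ + ψ t₀ / (θ * deriv ψ t₀) := by
  have ht₀ : t₀ ∈ Set.Icc t₀ T := ⟨le_rfl, hT.le⟩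
  have hTm : T ∈ Set.Icc t₀ T := ⟨hT.le, le_rfl⟩
  -- ψ'' ≥ 0 on the interval
  have h2 : ∀ t ∈ Set.Icc t₀ T, 0 ≤ deriv (deriv ψ) t := by
    intro t ht
    have h1 := hineq t ht
    have hp := hpos t ht
    nlinarith [sq_nonneg (deriv ψ t)]
  -- hence ψ' is monotone on the interval
  have hmono : MonotoneOn (deriv ψ) (Set.Icc t₀ T) := by
    apply monotoneOn_of_deriv_nonneg (convex_Icc _ _)
      (fun t ht => (hψ' t ht).continuousAt.continuousWithinAt)
    · intro t ht
      exact ((hψ' t (interior_subset ht)).differentiableWithinAt)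
    · intro t ht
      exact h2 t (interior_subset ht)
  have hd : ∀ t ∈ Set.Icc t₀ T, 0 < deriv ψ t := fun t ht =>
    lt_of_lt_of_le hψ'0 (hmono ht₀ ht ht.1)
  -- the auxiliary function w
  set w : ℝ → ℝ := fun s => ψ s / deriv ψ s + θ * s with hw
  have hwd : ∀ t ∈ Set.Icc t₀ T, HasDerivAt w
      ((deriv ψ t * deriv ψ t - ψ t * deriv (deriv ψ) t) / (deriv ψ t) ^ 2 + θ) t := by
    intro t ht
    have h1 := (hψ t ht).hasDerivAt
    have h2' := (hψ' t ht).hasDerivAt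
    have hdiv := h1.div h2' (hd t ht).ne'
    have hlin : HasDerivAt (fun s : ℝ => θ * s) θ t := by
      simpa using (hasDerivAt_id t).const_mul θ
    exact hdiv.add hlin
  have hanti : AntitoneOn w (Set.Icc t₀ T) := by
    apply antitoneOn_of_deriv_nonpos (convex_Icc _ _)
      (fun t ht => (hwd t ht).differentiableAt.continuousAt.continuousWithinAt)
    · intro t ht
      exact (hwd t (interior_subset ht)).differentiableAt.differentiableWithinAt
    · intro t ht
      have htm := interior_subset ht
      rw [(hwd t htm).deriv]
      have hp := hpos t htm
      have hq := hd t htm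
      have hi := hineq t htm
      have hq2 : (0:ℝ) < (deriv ψ t) ^ 2 := by positivity
      have key : (deriv ψ t * deriv ψ t - ψ t * deriv (deriv ψ) t) / (deriv ψ t) ^ 2 ≤ -θ := by
        rw [div_le_iff₀ hq2]
        nlinarith
      linarith
  have hwle : w T ≤ w t₀ := hanti ht₀ hTm hT.le
  have hvT : 0 < ψ T / deriv ψ T := div_pos (hpos T hTm) (hd T hTm)
  have hc : θ * T < θ * (t₀ + ψ t₀ / (θ * deriv ψ t₀)) := by
    have heq : θ * (ψ t₀ / (θ * deriv ψ t₀)) = ψ t₀ / deriv ψ t₀ := by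
      field_simp
    have hle : ψ T / deriv ψ T + θ * T ≤ ψ t₀ / deriv ψ t₀ + θ * t₀ := hwle
    nlinarith [hle, hvT, heq]
  exact (mul_lt_mul_iff_right₀ hθ).mp hc
end

section
/- Let N ≥ 1 be an integer, Ω a measurable subset of ℝ^N, and let p, q, α, B be real numbers with 2 ≤ p < q, α > 0 and B > 0. Let u : ℝ^N → ℝ be continuously differentiable with compact support contained in Ω, and assume the embedding-type inequality (∫_Ω |u(x)|^{q+α} dx)^{1/(q+α)} ≤ B · (∫_Ω ‖∇u(x)‖^p dx)^{1/p}. If 0 < (∫_Ω ‖∇u(x)‖^p dx)^{1/p} ≤ r(α), then I(u) > 0. -/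
open MeasureTheory

theorem nehari_pos_of_grad_le {N : ℕ} (hN : 1 ≤ N) (Ω : Set (EuclideanSpace ℝ (Fin N)))
    (hΩ : MeasurableSet Ω) (p q α B : ℝ)
    (hp : 2 ≤ p) (hpq : p < q) (hα : 0 < α) (hB : 0 < B)
    (u : EuclideanSpace ℝ (Fin N) → ℝ)
    (hu : ContDiff ℝ 1 u) (hcs : HasCompactSupport u) (hsupp : tsupport u ⊆ Ω)
    (hemb : (∫ x in Ω, |u x| ^ (q + α)) ^ (1 / (q + α)) ≤
      B * (∫ x in Ω, ‖fderiv ℝ u x‖ ^ p) ^ (1 / p))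
    (hpos : 0 < (∫ x in Ω, ‖fderiv ℝ u x‖ ^ p) ^ (1 / p))
    (hle : (∫ x in Ω, ‖fderiv ℝ u x‖ ^ p) ^ (1 / p) ≤
      (α / B ^ (q + α)) ^ (1 / (q + α - p))) :
    0 < (∫ x in Ω, ‖fderiv ℝ u x‖ ^ p) - ∫ x in Ω, |u x| ^ q * Real.log |u x| := by
  have hq : 0 < q := by linarith
  have hp0 : 0 < p := by linarith
  have hqα : 0 < q + α := by linarith
  have hs : 0 < q + α - p := by linarith
  set G := ∫ x in Ω, ‖fderiv ℝ u x‖ ^ p with hGdef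
  have hGnn : 0 ≤ G := integral_nonneg fun x => Real.rpow_nonneg (norm_nonneg _) _
  have hGpos : 0 < G := by
    rcases hGnn.lt_or_eq with h | h
    · exact h
    · exfalso
      rw [← h, Real.zero_rpow (by positivity)] at hpos
      exact lt_irrefl 0 hpos
  set g := G ^ (1 / p) with hgdef
  have hgpos : 0 < g := hpos
  have hgp : g ^ p = G := by
    rw [hgdef, ← Real.rpow_mul hGnn, one_div_mul_cancel (ne_of_gt hp0), Real.rpow_one]
  -- pointwise bound
  have key : ∀ t : ℝ, 0 ≤ t → t ^ q * Real.log t ≤ t ^ (q + α) / (α * Real.exp 1) := by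
    intro t ht
    rcases ht.lt_or_eq with h | h
    · have hlog : Real.log t ≤ t ^ α / (α * Real.exp 1) := by
        have h1 : Real.log (t ^ α / Real.exp 1) ≤ t ^ α / Real.exp 1 - 1 :=
          Real.log_le_sub_one_of_pos (by positivity)
        rw [Real.log_div (by positivity) (Real.exp_ne_zero 1), Real.log_exp,
          Real.log_rpow h] at h1
        have h2 : α * Real.log t * Real.exp 1 ≤ t ^ α := by
          have := mul_le_mul_of_nonneg_right (show α * Real.log t ≤ t ^ α / Real.exp 1 by linarith)
            (le_of_lt (Real.exp_pos 1))
          rwa [div_mul_cancel₀ _ (Real.exp_ne_zero 1)] at this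
        rw [le_div_iff₀ (by positivity)]
        nlinarith [h2]
      calc t ^ q * Real.log t ≤ t ^ q * (t ^ α / (α * Real.exp 1)) := by
            exact mul_le_mul_of_nonneg_left hlog (Real.rpow_nonneg ht _)
        _ = t ^ (q + α) / (α * Real.exp 1) := by
            rw [Real.rpow_add h]; ring
    · rw [← h, Real.zero_rpow (ne_of_gt hq), Real.zero_rpow (ne_of_gt hqα)]
      simp
  -- integrability of |u|^(q+α)
  have hcont2 : Continuous fun x => |u x| ^ (q + α) := by
    have hc : Continuous fun t : ℝ => |t| ^ (q + α) :=
      continuous_iff_continuousAt.mpr fun t =>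
        (Real.continuousAt_rpow_const _ _ (Or.inr hqα.le)).comp continuous_abs.continuousAt
    exact hc.comp hu.continuous
  have hcs2 : HasCompactSupport fun x => |u x| ^ (q + α) := by
    apply hcs.comp_left (g := fun t : ℝ => |t| ^ (q + α))
    simp [Real.zero_rpow (ne_of_gt hqα)]
  have hint2 : IntegrableOn (fun x => |u x| ^ (q + α)) Ω volume :=
    (hcont2.integrable_of_hasCompactSupport hcs2).integrableOn
  set A := ∫ x in Ω, |u x| ^ (q + α) with hAdef
  have hAnn : 0 ≤ A := integral_nonneg fun x => Real.rpow_nonneg (abs_nonneg _) _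
  -- A ≤ B^(q+α) * g^(q+α)
  have hA1 : A ≤ B ^ (q + α) * g ^ (q + α) := by
    have h1 : (A ^ (1 / (q + α))) ^ (q + α) ≤ (B * g) ^ (q + α) :=
      Real.rpow_le_rpow (Real.rpow_nonneg hAnn _) hemb (le_of_lt hqα)
    rw [← Real.rpow_mul hAnn, one_div_mul_cancel (ne_of_gt hqα), Real.rpow_one,
      Real.mul_rpow (le_of_lt hB) (le_of_lt hgpos)] at h1
    exact h1
  -- g^(q+α-p) ≤ α / B^(q+α)
  have hA2 : g ^ (q + α - p) ≤ α / B ^ (q + α) := by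
    have h1 : g ^ (q + α - p) ≤ ((α / B ^ (q + α)) ^ (1 / (q + α - p))) ^ (q + α - p) :=
      Real.rpow_le_rpow (le_of_lt hgpos) hle (le_of_lt hs)
    have hR : ((α / B ^ (q + α)) ^ (1 / (q + α - p))) ^ (q + α - p) = α / B ^ (q + α) := by
      rw [← Real.rpow_mul (by positivity), one_div_mul_cancel (ne_of_gt hs), Real.rpow_one]
    rwa [hR] at h1
  have hA3 : A ≤ α * G := by
    have hBpos : (0:ℝ) < B ^ (q + α) := Real.rpow_pos_of_pos hB _
    have hsplit : g ^ (q + α) = g ^ (q + α - p) * g ^ p := by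
      rw [← Real.rpow_add hgpos]; ring_nf
    calc A ≤ B ^ (q + α) * g ^ (q + α) := hA1
      _ = B ^ (q + α) * g ^ (q + α - p) * G := by rw [hsplit, hgp]; ring
      _ ≤ B ^ (q + α) * (α / B ^ (q + α)) * G := by
          apply mul_le_mul_of_nonneg_right _ hGnn
          exact mul_le_mul_of_nonneg_left hA2 (le_of_lt hBpos)
      _ = α * G := by field_simp
  -- bound log integral
  have hexp1 : (1:ℝ) < Real.exp 1 := by
    have := Real.add_one_le_exp 1; linarith
  have hfinal : (∫ x in Ω, |u x| ^ q * Real.log |u x|) < G := by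
    by_cases hI : IntegrableOn (fun x => |u x| ^ q * Real.log |u x|) Ω volume
    · have hmono : (∫ x in Ω, |u x| ^ q * Real.log |u x|) ≤
          ∫ x in Ω, |u x| ^ (q + α) / (α * Real.exp 1) := by
        apply setIntegral_mono hI (hint2.div_const _)
        intro x
        exact key _ (abs_nonneg _)
      rw [integral_div] at hmono
      have h1 : A / (α * Real.exp 1) ≤ α * G / (α * Real.exp 1) := by
        gcongr
      have h2 : α * G / (α * Real.exp 1) = G / Real.exp 1 := by
        field_simp
      have h3 : G / Real.exp 1 < G := by
        rw [div_lt_iff₀ (by positivity)]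
        nlinarith
      calc (∫ x in Ω, |u x| ^ q * Real.log |u x|) ≤ A / (α * Real.exp 1) := hmono
        _ ≤ α * G / (α * Real.exp 1) := h1
        _ = G / Real.exp 1 := h2
        _ < G := h3
    · rw [integral_undef hI]
      exact hGpos
  linarith
end

section
/- Let N ≥ 1 be an integer, Ω a measurable subset of ℝ^N, and let p, q, α, B be real numbers with 2 ≤ p < q, α > 0 and B > 0. Let u : ℝ^N → ℝ be continuously differentiable with compact support contained in Ω, and assume the embedding-type inequality (∫_Ω |u(x)|^{q+α} dx)^{1/(q+α)} ≤ B · (∫_Ω ‖∇u(x)‖^p dx)^{1/p}. If ∫_Ω ‖∇u(x)‖^p dx > 0 and I(u) ≤ 0, then (∫_Ω ‖∇u(x)‖^p dx)^{1/p} > r(α). -/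
open MeasureTheory

theorem grad_gt_of_nehari_nonpos {N : ℕ} (hN : 1 ≤ N) (Ω : Set (EuclideanSpace ℝ (Fin N)))
    (hΩ : MeasurableSet Ω) (p q α B : ℝ)
    (hp : 2 ≤ p) (hpq : p < q) (hα : 0 < α) (hB : 0 < B)
    (u : EuclideanSpace ℝ (Fin N) → ℝ)
    (hu : ContDiff ℝ 1 u) (hcs : HasCompactSupport u) (hsupp : tsupport u ⊆ Ω)
    (hemb : (∫ x in Ω, |u x| ^ (q + α)) ^ (1 / (q + α)) ≤
      B * (∫ x in Ω, ‖fderiv ℝ u x‖ ^ p) ^ (1 / p))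
    (hgrad : 0 < ∫ x in Ω, ‖fderiv ℝ u x‖ ^ p)
    (hI : (∫ x in Ω, ‖fderiv ℝ u x‖ ^ p) - (∫ x in Ω, |u x| ^ q * Real.log |u x|) ≤ 0) :
    (α / B ^ (q + α)) ^ (1 / (q + α - p)) <
      (∫ x in Ω, ‖fderiv ℝ u x‖ ^ p) ^ (1 / p) := by
  have hq0 : (0:ℝ) < q := by linarith
  have hqα : (0:ℝ) < q + α := by linarith
  have hqαp : (0:ℝ) < q + α - p := by linarith
  have hp0 : (0:ℝ) < p := by linarith
  set D := ∫ x in Ω, ‖fderiv ℝ u x‖ ^ p with hDdef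
  -- continuity of |u| ^ r for r > 0
  have habs : Continuous fun x => |u x| := hu.continuous.abs
  have hcr : ∀ r : ℝ, 0 < r → Continuous fun x => |u x| ^ r := by
    intro r hr
    exact habs.rpow_const (fun x => Or.inr hr.le)
  -- the log-term function, rewritten via mul_log
  have hgeq : (fun x => |u x| ^ q * Real.log |u x|) =
      fun x => (1/q) * ((|u x| ^ q) * Real.log (|u x| ^ q)) := by
    funext x
    rcases eq_or_ne (u x) 0 with h | h
    · simp [h, Real.zero_rpow hq0.ne']
    · rw [Real.log_rpow (abs_pos.mpr h)]
      field_simp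
  have hgcont : Continuous fun x => |u x| ^ q * Real.log |u x| := by
    rw [hgeq]
    exact continuous_const.mul (Real.continuous_mul_log.comp (hcr q hq0))
  -- compact supports
  have hzero : ∀ r : ℝ, 0 < r → (fun t : ℝ => |t| ^ r) 0 = 0 := by
    intro r hr; simp [Real.zero_rpow hr.ne']
  have hcs1 : HasCompactSupport fun x => |u x| ^ (q + α) :=
    hcs.comp_left (g := fun t : ℝ => |t| ^ (q + α)) (by simp [Real.zero_rpow hqα.ne'])
  have hcs2 : HasCompactSupport fun x => |u x| ^ q :=
    hcs.comp_left (g := fun t : ℝ => |t| ^ q) (by simp [Real.zero_rpow hq0.ne'])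
  have hcs3 : HasCompactSupport fun x => |u x| ^ q * Real.log |u x| :=
    hcs.comp_left (g := fun t : ℝ => |t| ^ q * Real.log |t|)
      (by simp [Real.zero_rpow hq0.ne'])
  -- integrability
  have hint1 : IntegrableOn (fun x => |u x| ^ (q + α)) Ω :=
    ((hcr _ hqα).integrable_of_hasCompactSupport hcs1).integrableOn
  have hint2 : IntegrableOn (fun x => |u x| ^ q) Ω :=
    ((hcr _ hq0).integrable_of_hasCompactSupport hcs2).integrableOn
  have hint3 : IntegrableOn (fun x => |u x| ^ q * Real.log |u x|) Ω :=
    (hgcont.integrable_of_hasCompactSupport hcs3).integrableOn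
  -- u is not identically zero
  have hune : ∃ x, u x ≠ 0 := by
    by_contra h
    push_neg at h
    have hu0 : u = fun _ => 0 := funext h
    have : D = 0 := by
      rw [hDdef]
      have : ∀ x, ‖fderiv ℝ u x‖ ^ p = 0 := by
        intro x
        rw [hu0]
        simp [Real.zero_rpow hp0.ne']
      simp [this]
    linarith
  -- K := ∫ |u|^q > 0
  have hK : 0 < ∫ x in Ω, |u x| ^ q := by
    rw [setIntegral_pos_iff_support_of_nonneg_ae]
    · have hsub : Function.support u ⊆ Function.support (fun x => |u x| ^ q) ∩ Ω := by
        intro x hx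
        refine ⟨?_, hsupp (subset_tsupport u hx)⟩
        simp only [Function.mem_support] at hx ⊢
        positivity
      refine lt_of_lt_of_le ?_ (measure_mono hsub)
      have hopen : IsOpen (Function.support u) := hu.continuous.isOpen_support
      obtain ⟨x, hx⟩ := hune
      exact hopen.measure_pos volume ⟨x, hx⟩
    · filter_upwards with x
      positivity
    · exact hint2
  -- pointwise bound: |u|^q log|u| ≤ (|u|^{q+α} - |u|^q)/α
  have hpw : ∀ x ∈ Ω, |u x| ^ q * Real.log |u x| ≤ (|u x| ^ (q + α) - |u x| ^ q) / α := by
    intro x _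
    rcases eq_or_ne (u x) 0 with h | h
    · simp [h, Real.zero_rpow hq0.ne', Real.zero_rpow hqα.ne']
    · set t := |u x| with ht
      have ht0 : 0 < t := abs_pos.mpr h
      have hlog : Real.log t ≤ (t ^ α - 1) / α := by
        have := Real.log_le_sub_one_of_pos (Real.rpow_pos_of_pos ht0 α)
        rw [Real.log_rpow ht0] at this
        rw [le_div_iff₀ hα]
        linarith
      have htq : (0:ℝ) ≤ t ^ q := (Real.rpow_pos_of_pos ht0 q).le
      have hmul := mul_le_mul_of_nonneg_left hlog htq
      have hadd : t ^ (q + α) = t ^ q * t ^ α := Real.rpow_add ht0 q α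
      calc t ^ q * Real.log t ≤ t ^ q * ((t ^ α - 1) / α) := hmul
        _ = (t ^ (q + α) - t ^ q) / α := by rw [hadd]; ring
  -- integrate
  have hL : (∫ x in Ω, |u x| ^ q * Real.log |u x|) ≤
      ((∫ x in Ω, |u x| ^ (q + α)) - ∫ x in Ω, |u x| ^ q) / α := by
    have h1 : (∫ x in Ω, |u x| ^ q * Real.log |u x|) ≤
        ∫ x in Ω, (|u x| ^ (q + α) - |u x| ^ q) / α :=
      setIntegral_mono_on hint3 ((hint1.sub hint2).div_const α) hΩ hpw
    have h2 : (∫ x in Ω, (|u x| ^ (q + α) - |u x| ^ q) / α) =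
        ((∫ x in Ω, |u x| ^ (q + α)) - ∫ x in Ω, |u x| ^ q) / α := by
      rw [integral_div, integral_sub hint1 hint2]
    linarith [h2 ▸ h1]
  set J := ∫ x in Ω, |u x| ^ (q + α) with hJdef
  have hJ0 : 0 ≤ J := by
    apply setIntegral_nonneg hΩ
    intro x _
    positivity
  -- α D < J
  have hαD : α * D < J := by
    have : D ≤ (J - (∫ x in Ω, |u x| ^ q)) / α := le_trans (by linarith) hL
    rw [le_div_iff₀ hα] at this
    nlinarith
  -- J ≤ B^{q+α} D^{(q+α)/p}
  have hJle : J ≤ B ^ (q + α) * D ^ ((q + α) / p) := by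
    have h1 : (J ^ (1 / (q + α))) ^ (q + α) ≤ (B * D ^ (1 / p)) ^ (q + α) := by
      apply Real.rpow_le_rpow (Real.rpow_nonneg hJ0 _) hemb hqα.le
    rw [← Real.rpow_mul hJ0, one_div, inv_mul_cancel₀ hqα.ne', Real.rpow_one] at h1
    rw [Real.mul_rpow hB.le (Real.rpow_nonneg hgrad.le _), ← Real.rpow_mul hgrad.le,
      one_div, inv_mul_eq_div] at h1
    exact h1
  -- combine: α / B^{q+α} < D ^ ((q+α-p)/p)
  have hBpos : (0:ℝ) < B ^ (q + α) := Real.rpow_pos_of_pos hB _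
  have hkey : α / B ^ (q + α) < D ^ ((q + α - p) / p) := by
    have hDpos : 0 < D := hgrad
    have h1 : α * D < B ^ (q + α) * D ^ ((q + α) / p) := lt_of_lt_of_le hαD hJle
    have he : (q + α) / p = (q + α - p) / p + 1 := by field_simp; ring
    rw [he, Real.rpow_add hDpos, Real.rpow_one] at h1
    rw [div_lt_iff₀ hBpos]
    have h2 : α * D < D ^ ((q + α - p) / p) * B ^ (q + α) * D := by
      calc α * D < B ^ (q + α) * (D ^ ((q + α - p) / p) * D) := h1
        _ = D ^ ((q + α - p) / p) * B ^ (q + α) * D := by ring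
    exact lt_of_mul_lt_mul_right h2 hDpos.le
  -- take rpow (1/(q+α-p))
  have hfin := Real.rpow_lt_rpow (by positivity) hkey (by positivity : 0 < 1 / (q + α - p))
  have hexp : ((q + α - p) / p) * (1 / (q + α - p)) = 1 / p := by
    field_simp
  calc (α / B ^ (q + α)) ^ (1 / (q + α - p))
      < (D ^ ((q + α - p) / p)) ^ (1 / (q + α - p)) := hfin
    _ = D ^ (1 / p) := by rw [← Real.rpow_mul hgrad.le, hexp]
end

section
/- Let N ≥ 1 be an integer, Ω a measurable subset of ℝ^N, and let p, q, α, B be real numbers with 2 ≤ p < q, α > 0 and B > 0. Let u : ℝ^N → ℝ be continuously differentiable with compact support contained in Ω, and assume the embedding-type inequality (∫_Ω |u(x)|^{q+α} dx)^{1/(q+α)} ≤ B · (∫_Ω ‖∇u(x)‖^p dx)^{1/p}. If ∫_Ω ‖∇u(x)‖^p dx > 0 and I(u) = 0 (i.e. u lies on the Nehari manifold), then J(u) > ((q−p)/(p·q)) · r(α)^p. -/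
open MeasureTheory

theorem energy_gt_of_nehari_zero {N : ℕ} (hN : 1 ≤ N) (Ω : Set (EuclideanSpace ℝ (Fin N)))
    (hΩ : MeasurableSet Ω) (p q α B : ℝ)
    (hp : 2 ≤ p) (hpq : p < q) (hα : 0 < α) (hB : 0 < B)
    (u : EuclideanSpace ℝ (Fin N) → ℝ)
    (hu : ContDiff ℝ 1 u) (hcs : HasCompactSupport u) (hsupp : tsupport u ⊆ Ω)
    (hemb : (∫ x in Ω, |u x| ^ (q + α)) ^ (1 / (q + α)) ≤
      B * (∫ x in Ω, ‖fderiv ℝ u x‖ ^ p) ^ (1 / p))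
    (hgrad : 0 < ∫ x in Ω, ‖fderiv ℝ u x‖ ^ p)
    (hI : (∫ x in Ω, ‖fderiv ℝ u x‖ ^ p) - (∫ x in Ω, |u x| ^ q * Real.log |u x|) = 0) :
    ((q - p) / (p * q)) * ((α / B ^ (q + α)) ^ (1 / (q + α - p))) ^ p <
      (1 / p) * (∫ x in Ω, ‖fderiv ℝ u x‖ ^ p)
        - (1 / q) * (∫ x in Ω, |u x| ^ q * Real.log |u x|)
        + (1 / q ^ 2) * (∫ x in Ω, |u x| ^ q) := by
  have hp0 : (0:ℝ) < p := by linarith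
  have hq0 : (0:ℝ) < q := by linarith
  have hqα : (0:ℝ) < q + α := by linarith
  have hs : (0:ℝ) < q + α - p := by linarith
  have hcu : Continuous u := hu.continuous
  set X := ∫ x in Ω, ‖fderiv ℝ u x‖ ^ p with hX
  have habs : Continuous fun x => |u x| := continuous_abs.comp hcu
  have hcqα : Continuous fun x => |u x| ^ (q + α) :=
    habs.rpow_const (fun x => Or.inr hqα.le)
  have hcq : Continuous fun x => |u x| ^ q :=
    habs.rpow_const (fun x => Or.inr hq0.le)
  have hcsqα : HasCompactSupport fun x => |u x| ^ (q + α) := by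
    have := hcs.comp_left (g := fun t : ℝ => |t| ^ (q + α))
      (by simp [Real.zero_rpow hqα.ne'])
    simpa [Function.comp_def] using this
  have hcsq : HasCompactSupport fun x => |u x| ^ q := by
    have := hcs.comp_left (g := fun t : ℝ => |t| ^ q)
      (by simp [Real.zero_rpow hq0.ne'])
    simpa [Function.comp_def] using this
  have hintqα : IntegrableOn (fun x => |u x| ^ (q + α)) Ω volume :=
    (hcqα.integrable_of_hasCompactSupport hcsqα).integrableOn
  have hintq : IntegrableOn (fun x => |u x| ^ q) Ω volume :=
    (hcq.integrable_of_hasCompactSupport hcsq).integrableOn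
  -- f = |u|^q log|u| is continuous with compact support
  have hfeq : (fun x => |u x| ^ q * Real.log |u x|) =
      fun x => |u x| ^ (q - 1) * (|u x| * Real.log |u x|) := by
    funext x
    rcases eq_or_ne (u x) 0 with h | h
    · simp [h, Real.zero_rpow hq0.ne']
    · have h0 : (0:ℝ) < |u x| := abs_pos.mpr h
      have key : |u x| ^ (q - 1) * |u x| = |u x| ^ q := by
        nth_rewrite 2 [← Real.rpow_one |u x|]
        rw [← Real.rpow_add h0]
        ring_nf
      rw [← key]; ring
  have hcf : Continuous fun x => |u x| ^ q * Real.log |u x| := by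
    rw [hfeq]
    exact (habs.rpow_const (fun x => Or.inr (by linarith))).mul
      (Real.continuous_mul_log.comp habs)
  have hcsf : HasCompactSupport fun x => |u x| ^ q * Real.log |u x| := by
    have := hcs.comp_left (g := fun t : ℝ => |t| ^ q * Real.log |t|)
      (by simp [Real.zero_rpow hq0.ne'])
    simpa [Function.comp_def] using this
  have hintf : IntegrableOn (fun x => |u x| ^ q * Real.log |u x|) Ω volume :=
    (hcf.integrable_of_hasCompactSupport hcsf).integrableOn
  -- pointwise bound  |u|^q log|u| ≤ |u|^{q+α}/α
  have hpt : ∀ x, |u x| ^ q * Real.log |u x| ≤ |u x| ^ (q + α) / α := by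
    intro x
    rcases eq_or_ne (u x) 0 with h | h
    · simp [h, Real.zero_rpow hq0.ne', Real.zero_rpow hqα.ne']
    · have h0 : (0:ℝ) < |u x| := abs_pos.mpr h
      have h1 : α * Real.log |u x| = Real.log (|u x| ^ α) :=
        (Real.log_rpow h0 α).symm
      have h2 : Real.log (|u x| ^ α) ≤ |u x| ^ α - 1 :=
        Real.log_le_sub_one_of_pos (Real.rpow_pos_of_pos h0 α)
      have h3 : α * Real.log |u x| ≤ |u x| ^ α := by linarith
      have hq_pos : (0:ℝ) < |u x| ^ q := Real.rpow_pos_of_pos h0 q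
      have hsplit : |u x| ^ (q + α) = |u x| ^ q * |u x| ^ α :=
        Real.rpow_add h0 q α
      rw [hsplit, div_eq_inv_mul]
      have := mul_le_mul_of_nonneg_left h3 hq_pos.le
      calc |u x| ^ q * Real.log |u x|
          = α⁻¹ * (|u x| ^ q * (α * Real.log |u x|)) := by
            field_simp
        _ ≤ α⁻¹ * (|u x| ^ q * |u x| ^ α) := by
            apply mul_le_mul_of_nonneg_left this (inv_nonneg.mpr hα.le)
  -- integral bound: X = ∫ f ≤ (1/α) ∫ |u|^{q+α}
  have hXeq : X = ∫ x in Ω, |u x| ^ q * Real.log |u x| := by linarith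
  have hIα : ∫ x in Ω, |u x| ^ q * Real.log |u x| ≤
      (∫ x in Ω, |u x| ^ (q + α)) / α := by
    have h1 : ∫ x in Ω, |u x| ^ q * Real.log |u x| ≤
        ∫ x in Ω, |u x| ^ (q + α) / α := by
      apply setIntegral_mono_on hintf (hintqα.div_const α) hΩ
      intro x _; exact hpt x
    rwa [integral_div] at h1
  -- embedding: ∫|u|^{q+α} ≤ B^{q+α} * X^{(q+α)/p}
  have hYnn : 0 ≤ ∫ x in Ω, |u x| ^ (q + α) :=
    setIntegral_nonneg hΩ (fun x _ => Real.rpow_nonneg (abs_nonneg _) _)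
  have hXpow_pos : 0 < X ^ (1 / p) := Real.rpow_pos_of_pos hgrad _
  have hemb' : (∫ x in Ω, |u x| ^ (q + α)) ≤ B ^ (q + α) * X ^ ((q + α) / p) := by
    have h1 : ((∫ x in Ω, |u x| ^ (q + α)) ^ (1 / (q + α))) ^ (q + α) ≤
        (B * X ^ (1 / p)) ^ (q + α) :=
      Real.rpow_le_rpow (Real.rpow_nonneg hYnn _) hemb hqα.le
    rw [← Real.rpow_mul hYnn, one_div, inv_mul_cancel₀ hqα.ne', Real.rpow_one,
      Real.mul_rpow hB.le hXpow_pos.le, ← Real.rpow_mul hgrad.le] at h1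
    · calc (∫ x in Ω, |u x| ^ (q + α)) ≤ B ^ (q+α) * X ^ (1 / p * (q+α)) := h1
        _ = B ^ (q + α) * X ^ ((q + α) / p) := by rw [one_div, inv_mul_eq_div]
  -- combine: α * X ≤ B^{q+α} * X^{(q+α)/p}
  have hkey : α * X ≤ B ^ (q + α) * X ^ ((q + α) / p) := by
    have : α * X ≤ ∫ x in Ω, |u x| ^ (q + α) := by
      rw [hXeq]
      have := hIα
      calc α * (∫ x in Ω, |u x| ^ q * Real.log |u x|)
          ≤ α * ((∫ x in Ω, |u x| ^ (q + α)) / α) :=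
            mul_le_mul_of_nonneg_left hIα hα.le
        _ = ∫ x in Ω, |u x| ^ (q + α) := by field_simp
    linarith
  -- derive r^p ≤ X
  have hBqα : (0:ℝ) < B ^ (q + α) := Real.rpow_pos_of_pos hB _
  have hXs : α / B ^ (q + α) ≤ X ^ ((q + α - p) / p) := by
    have hsplit : X * X ^ ((q + α - p) / p) = X ^ ((q + α) / p) := by
      nth_rewrite 1 [← Real.rpow_one X]
      rw [← Real.rpow_add hgrad]
      congr 1; field_simp; ring
    rw [← hsplit] at hkey
    rw [div_le_iff₀ hBqα]
    have hX' : α * X ≤ B ^ (q + α) * X ^ ((q + α - p) / p) * X := by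
      calc α * X ≤ B ^ (q + α) * (X * X ^ ((q + α - p) / p)) := hkey
        _ = B ^ (q + α) * X ^ ((q + α - p) / p) * X := by ring
    exact le_of_mul_le_mul_right (by linarith) hgrad
  have hr : ((α / B ^ (q + α)) ^ (1 / (q + α - p))) ^ p ≤ X := by
    have hc : (0:ℝ) < α / B ^ (q + α) := div_pos hα hBqα
    have h1 : (α / B ^ (q + α)) ^ (p / (q + α - p)) ≤
        (X ^ ((q + α - p) / p)) ^ (p / (q + α - p)) :=
      Real.rpow_le_rpow hc.le hXs (by positivity)
    have h2 : (X ^ ((q + α - p) / p)) ^ (p / (q + α - p)) = X := by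
      rw [← Real.rpow_mul hgrad.le]
      rw [div_mul_div_comm, mul_comm, div_self (by positivity), Real.rpow_one]
    have h3 : ((α / B ^ (q + α)) ^ (1 / (q + α - p))) ^ p =
        (α / B ^ (q + α)) ^ (p / (q + α - p)) := by
      rw [← Real.rpow_mul hc.le]
      congr 1; field_simp
    rw [h3]; rw [h2] at h1; exact h1
  -- positivity of ∫ |u|^q
  have hune : u ≠ 0 := by
    intro h
    have hzero : (∫ x in Ω, ‖fderiv ℝ u x‖ ^ p) = 0 := by
      have hz : ∀ x, ‖fderiv ℝ u x‖ ^ p = 0 := by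
        intro x
        rw [h]
        show ‖fderiv ℝ (fun _ => (0:ℝ)) x‖ ^ p = 0
        rw [fderiv_fun_const]
        simp [Real.zero_rpow hp0.ne']
      simp only [hz, integral_zero]
    rw [hX, hzero] at hgrad
    exact lt_irrefl 0 hgrad
  have hQpos : 0 < ∫ x in Ω, |u x| ^ q := by
    rw [setIntegral_pos_iff_support_of_nonneg_ae
      (Filter.Eventually.of_forall (fun x => Real.rpow_nonneg (abs_nonneg _) _)) hintq]
    have hsupp_eq : Function.support (fun x => |u x| ^ q) = Function.support u := by
      ext x
      simp only [Function.mem_support]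
      constructor
      · intro h h0; apply h; simp [h0, Real.zero_rpow hq0.ne']
      · intro h
        exact (Real.rpow_pos_of_pos (abs_pos.mpr h) q).ne'
    rw [hsupp_eq]
    have hsub : Function.support u ∩ Ω = Function.support u := by
      apply Set.inter_eq_left.mpr
      exact subset_trans subset_closure hsupp
    rw [hsub]
    apply (hcu.isOpen_support).measure_pos volume
    rw [Function.support_nonempty_iff]
    exact hune
  -- conclude
  have hcoef : (0:ℝ) < (q - p) / (p * q) := div_pos (by linarith) (by positivity)
  rw [hXeq] at hr ⊢
  set Y := ∫ x in Ω, |u x| ^ q * Real.log |u x|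
  have : (q - p) / (p * q) * Y = (1/p) * Y - (1/q) * Y := by
    field_simp
  nlinarith [mul_le_mul_of_nonneg_left hr hcoef.le,
    mul_pos (show (0:ℝ) < 1 / q^2 by positivity) hQpos]
end

section
/- Let q > 2 be a real number and T > 0. Suppose L, K : ℝ → ℝ are differentiable at every point of [0, T) and satisfy, for all t ∈ [0, T): L(t) > 0, K'(t) ≥ 0, L'(t) ≥ q·K(t), and L(t)·K'(t) ≥ (1/2)·(L'(t))². If moreover K(0) > 0, then T ≤ 2·L(0)/(q·(q−2)·K(0)). -/
theorem blowup_negative_energy_core (q T : ℝ) (hq : 2 < q) (hT : 0 < T) (L K : ℝ → ℝ)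
    (hL : ∀ t ∈ Set.Ico (0 : ℝ) T, DifferentiableAt ℝ L t)
    (hK : ∀ t ∈ Set.Ico (0 : ℝ) T, DifferentiableAt ℝ K t)
    (hLpos : ∀ t ∈ Set.Ico (0 : ℝ) T, 0 < L t)
    (hK' : ∀ t ∈ Set.Ico (0 : ℝ) T, 0 ≤ deriv K t)
    (hL' : ∀ t ∈ Set.Ico (0 : ℝ) T, q * K t ≤ deriv L t)
    (hLK : ∀ t ∈ Set.Ico (0 : ℝ) T, (1 / 2) * (deriv L t) ^ 2 ≤ L t * deriv K t)
    (hK0 : 0 < K 0) :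
    T ≤ 2 * L 0 / (q * (q - 2) * K 0) := by
  have hq0 : (0:ℝ) < q := by linarith
  have h0 : (0:ℝ) ∈ Set.Ico (0:ℝ) T := ⟨le_refl _, hT⟩
  have hL00 : 0 < L 0 := hLpos 0 h0
  -- K is positive on [0,T)
  have hKmono : MonotoneOn K (Set.Ico 0 T) := by
    apply monotoneOn_of_deriv_nonneg (convex_Ico 0 T)
    · exact fun t ht => (hK t ht).continuousAt.continuousWithinAt
    · rw [interior_Ico]
      exact fun t ht => (hK t (Set.Ioo_subset_Ico_self ht)).differentiableWithinAt
    · rw [interior_Ico]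
      exact fun t ht => hK' t (Set.Ioo_subset_Ico_self ht)
  have hKpos : ∀ t ∈ Set.Ico (0:ℝ) T, 0 < K t := fun t ht =>
    lt_of_lt_of_le hK0 (hKmono h0 ht ht.1)
  have hL'pos : ∀ t ∈ Set.Ico (0:ℝ) T, 0 ≤ deriv L t := fun t ht =>
    le_trans (le_of_lt (mul_pos hq0 (hKpos t ht))) (hL' t ht)
  set c0 : ℝ := K 0 * L 0 ^ (-(q/2)) with hc0
  have hc0pos : 0 < c0 := mul_pos hK0 (Real.rpow_pos_of_pos hL00 _)
  -- G = K * L^{-q/2} is monotone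
  set G : ℝ → ℝ := fun t => K t * L t ^ (-(q/2)) with hGdef
  have hGderiv : ∀ t ∈ Set.Ico (0:ℝ) T, HasDerivAt G
      (deriv K t * L t ^ (-(q/2)) + K t * (deriv L t * (-(q/2)) * L t ^ (-(q/2) - 1))) t := by
    intro t ht
    exact ((hK t ht).hasDerivAt).mul
      (((hL t ht).hasDerivAt).rpow_const (Or.inl (ne_of_gt (hLpos t ht))))
  have hGd_nonneg : ∀ t ∈ Set.Ico (0:ℝ) T, 0 ≤ deriv G t := by
    intro t ht
    rw [(hGderiv t ht).deriv]
    have hLt := hLpos t ht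
    have hP : 0 < L t ^ (-(q/2) - 1) := Real.rpow_pos_of_pos hLt _
    have hsplit : L t ^ (-(q/2)) = L t * L t ^ (-(q/2) - 1) := by
      have h := Real.rpow_add hLt 1 (-(q/2) - 1)
      rw [show (1:ℝ) + (-(q/2) - 1) = -(q/2) by ring, Real.rpow_one] at h
      exact h
    rw [hsplit]
    have hcore : q/2 * K t * deriv L t ≤ L t * deriv K t := by
      have h1 := hLK t ht
      have h2 := hL' t ht
      have h3 := (hKpos t ht).le
      nlinarith [mul_le_mul_of_nonneg_right h2 (hL'pos t ht)]
    nlinarith [mul_le_mul_of_nonneg_right hcore hP.le]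
  have hGmono : MonotoneOn G (Set.Ico 0 T) := by
    apply monotoneOn_of_deriv_nonneg (convex_Ico 0 T)
    · exact fun t ht => ((hGderiv t ht).differentiableAt).continuousAt.continuousWithinAt
    · rw [interior_Ico]
      exact fun t ht =>
        ((hGderiv t (Set.Ioo_subset_Ico_self ht)).differentiableAt).differentiableWithinAt
    · rw [interior_Ico]
      exact fun t ht => hGd_nonneg t (Set.Ioo_subset_Ico_self ht)
  -- hence K t ≥ c0 * L t ^ (q/2)
  have hKlow : ∀ t ∈ Set.Ico (0:ℝ) T, c0 * L t ^ (q/2) ≤ K t := by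
    intro t ht
    have hLt := hLpos t ht
    have hQ : 0 < L t ^ (q/2) := Real.rpow_pos_of_pos hLt _
    have h1 : c0 ≤ K t * L t ^ (-(q/2)) := hGmono h0 ht ht.1
    have h2 : L t ^ (-(q/2)) * L t ^ (q/2) = 1 := by
      rw [← Real.rpow_add hLt, neg_add_cancel, Real.rpow_zero]
    calc c0 * L t ^ (q/2) ≤ (K t * L t ^ (-(q/2))) * L t ^ (q/2) :=
          mul_le_mul_of_nonneg_right h1 hQ.le
      _ = K t * (L t ^ (-(q/2)) * L t ^ (q/2)) := by ring
      _ = K t := by rw [h2, mul_one]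
  -- φ = L^{1-q/2} + c t is antitone
  set c : ℝ := (q/2 - 1) * q * c0 with hc
  have hcpos : 0 < c := by
    apply mul_pos (mul_pos (by linarith) hq0) hc0pos
  set φ : ℝ → ℝ := fun t => L t ^ (1 - q/2) + c * t with hφdef
  have hφderiv : ∀ t ∈ Set.Ico (0:ℝ) T, HasDerivAt φ
      (deriv L t * (1 - q/2) * L t ^ ((1 - q/2) - 1) + c * 1) t := by
    intro t ht
    exact (((hL t ht).hasDerivAt).rpow_const (Or.inl (ne_of_gt (hLpos t ht)))).add
      ((hasDerivAt_id t).const_mul c)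
  have hφd_nonpos : ∀ t ∈ Set.Ico (0:ℝ) T, deriv φ t ≤ 0 := by
    intro t ht
    rw [(hφderiv t ht).deriv]
    have hLt := hLpos t ht
    have hPe : 0 < L t ^ ((1 - q/2) - 1) := Real.rpow_pos_of_pos hLt _
    have h2 : L t ^ (q/2) * L t ^ ((1 - q/2) - 1) = 1 := by
      rw [← Real.rpow_add hLt, show q/2 + ((1 - q/2) - 1) = 0 by ring, Real.rpow_zero]
    have h4 : q * (c0 * L t ^ (q/2)) ≤ deriv L t := by
      have := mul_le_mul_of_nonneg_left (hKlow t ht) hq0.le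
      linarith [hL' t ht]
    have key : q * c0 ≤ deriv L t * L t ^ ((1 - q/2) - 1) := by
      have h5 := mul_le_mul_of_nonneg_right h4 hPe.le
      calc q * c0 = q * c0 * (L t ^ (q/2) * L t ^ ((1 - q/2) - 1)) := by rw [h2, mul_one]
        _ = q * (c0 * L t ^ (q/2)) * L t ^ ((1 - q/2) - 1) := by ring
        _ ≤ deriv L t * L t ^ ((1 - q/2) - 1) := h5
    nlinarith [mul_le_mul_of_nonneg_left key (show (0:ℝ) ≤ q/2 - 1 by linarith)]
  have hφanti : AntitoneOn φ (Set.Ico 0 T) := by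
    apply antitoneOn_of_deriv_nonpos (convex_Ico 0 T)
    · exact fun t ht => ((hφderiv t ht).differentiableAt).continuousAt.continuousWithinAt
    · rw [interior_Ico]
      exact fun t ht =>
        ((hφderiv t (Set.Ioo_subset_Ico_self ht)).differentiableAt).differentiableWithinAt
    · rw [interior_Ico]
      exact fun t ht => hφd_nonpos t (Set.Ioo_subset_Ico_self ht)
  -- every t in [0,T) is below the bound
  set B : ℝ := 2 * L 0 / (q * (q - 2) * K 0) with hB
  have hbound : ∀ t ∈ Set.Ico (0:ℝ) T, t < B := by
    intro t ht
    have h1 : φ t ≤ φ 0 := hφanti h0 ht ht.1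
    have h2 : 0 < L t ^ (1 - q/2) := Real.rpow_pos_of_pos (hLpos t ht) _
    have h3 : c * t < L 0 ^ (1 - q/2) := by
      have : φ 0 = L 0 ^ (1 - q/2) + c * 0 := rfl
      simp only [hφdef] at h1
      linarith
    -- multiply by L0^{q/2}
    have hQ0 : 0 < L 0 ^ (q/2) := Real.rpow_pos_of_pos hL00 _
    have h4 : c * t * L 0 ^ (q/2) < L 0 ^ (1 - q/2) * L 0 ^ (q/2) :=
      mul_lt_mul_of_pos_right h3 hQ0
    have h5 : L 0 ^ (1 - q/2) * L 0 ^ (q/2) = L 0 := by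
      rw [← Real.rpow_add hL00, show (1 - q/2) + q/2 = 1 by ring, Real.rpow_one]
    have h6 : L 0 ^ (-(q/2)) * L 0 ^ (q/2) = 1 := by
      rw [← Real.rpow_add hL00, neg_add_cancel, Real.rpow_zero]
    have h7 : c * L 0 ^ (q/2) = (q/2 - 1) * q * K 0 := by
      calc c * L 0 ^ (q/2) = (q/2 - 1) * q * K 0 * (L 0 ^ (-(q/2)) * L 0 ^ (q/2)) := by
            rw [hc, hc0]; ring
        _ = (q/2 - 1) * q * K 0 := by rw [h6, mul_one]
    have h8 : (q/2 - 1) * q * K 0 * t < L 0 := by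
      calc (q/2 - 1) * q * K 0 * t = c * t * L 0 ^ (q/2) := by rw [← h7]; ring
        _ < L 0 ^ (1 - q/2) * L 0 ^ (q/2) := h4
        _ = L 0 := h5
    have hden : 0 < q * (q - 2) * K 0 := mul_pos (mul_pos hq0 (by linarith)) hK0
    rw [hB, lt_div_iff₀ hden]
    nlinarith
  -- conclude T ≤ B
  by_contra hcon
  push_neg at hcon
  have hBpos : 0 < B := by
    rw [hB]
    exact div_pos (by linarith) (mul_pos (mul_pos hq0 (by linarith)) hK0)
  have htm : (B + T) / 2 ∈ Set.Ico (0:ℝ) T := ⟨by linarith, by linarith⟩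
  have := hbound _ htm
  linarith
end

section
/- Let q > 2, c > 0 and T > 0 be real numbers. Suppose L : ℝ → ℝ is differentiable at every point of [0, T) and satisfies L(t) > 0 and L'(t) ≥ c·L(t)^{q/2} for all t ∈ [0, T). Then T ≤ (2/((q−2)·c)) · L(0)^{(2−q)/2}. -/
theorem blowup_time_upper_bound (q c T : ℝ) (hq : 2 < q) (hc : 0 < c) (hT : 0 < T)
    (L : ℝ → ℝ)
    (hL : ∀ t ∈ Set.Ico (0 : ℝ) T, DifferentiableAt ℝ L t)
    (hLpos : ∀ t ∈ Set.Ico (0 : ℝ) T, 0 < L t)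
    (hL' : ∀ t ∈ Set.Ico (0 : ℝ) T, c * L t ^ (q / 2) ≤ deriv L t) :
    T ≤ (2 / ((q - 2) * c)) * L 0 ^ ((2 - q) / 2) := by
  set p : ℝ := (2 - q) / 2 with hp
  set k : ℝ := (q - 2) / 2 * c with hk
  have hpneg : p < 0 := by rw [hp]; linarith
  have hkpos : 0 < k := by rw [hk]; nlinarith
  have hH : ∀ t ∈ Set.Ico (0 : ℝ) T,
      HasDerivAt (fun s => L s ^ p + k * s) (deriv L t * p * L t ^ (p - 1) + k) t := by
    intro t ht
    have h1 := (hL t ht).hasDerivAt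
    have h2 := h1.rpow_const (p := p) (Or.inl (ne_of_gt (hLpos t ht)))
    have h3 : HasDerivAt (fun s : ℝ => k * s) k t := by
      simpa using (hasDerivAt_id t).const_mul k
    exact h2.add h3
  have hanti : AntitoneOn (fun s => L s ^ p + k * s) (Set.Ico 0 T) := by
    have hint : interior (Set.Ico (0:ℝ) T) = Set.Ioo 0 T := interior_Ico
    apply antitoneOn_of_deriv_nonpos (convex_Ico 0 T)
    · intro t ht
      exact (hH t ht).continuousAt.continuousWithinAt
    · intro t ht
      rw [hint] at ht
      exact ((hH t ⟨ht.1.le, ht.2⟩).differentiableAt).differentiableWithinAt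
    · intro t ht
      rw [hint] at ht
      have ht' : t ∈ Set.Ico (0:ℝ) T := ⟨ht.1.le, ht.2⟩
      rw [(hH t ht').deriv]
      have hLt := hLpos t ht'
      have hd := hL' t ht'
      have hXpos : (0:ℝ) < L t ^ (p - 1) := Real.rpow_pos_of_pos hLt _
      have hmul : deriv L t * (p * L t ^ (p - 1)) ≤
          (c * L t ^ (q / 2)) * (p * L t ^ (p - 1)) :=
        mul_le_mul_of_nonpos_right hd (by nlinarith)
      have hzero : L t ^ (q / 2) * L t ^ (p - 1) = 1 := by
        rw [← Real.rpow_add hLt]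
        have : q / 2 + (p - 1) = 0 := by rw [hp]; ring
        rw [this, Real.rpow_zero]
      have hcalc : (c * L t ^ (q / 2)) * (p * L t ^ (p - 1)) = c * p := by
        calc (c * L t ^ (q / 2)) * (p * L t ^ (p - 1))
            = c * p * (L t ^ (q / 2) * L t ^ (p - 1)) := by ring
          _ = c * p := by rw [hzero, mul_one]
      have hcp : c * p = -k := by rw [hp, hk]; ring
      nlinarith [hmul]
  have hbound : ∀ t ∈ Set.Ico (0:ℝ) T, k * t < L 0 ^ p := by
    intro t ht
    have h0 : (0:ℝ) ∈ Set.Ico (0:ℝ) T := ⟨le_refl 0, hT⟩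
    have := hanti h0 ht ht.1
    have hpos : (0:ℝ) < L t ^ p := Real.rpow_pos_of_pos (hLpos t ht) _
    simp only [mul_zero, add_zero] at this
    linarith
  have hk2 : 2 / ((q - 2) * c) = 1 / k := by
    rw [hk]; field_simp
  rw [hk2]
  by_contra h
  push_neg at h
  have hB : 0 < 1 / k * L 0 ^ p := by
    have : (0:ℝ) < L 0 ^ p := Real.rpow_pos_of_pos (hLpos 0 ⟨le_refl 0, hT⟩) _
    positivity
  have hmem : 1 / k * L 0 ^ p ∈ Set.Ico (0:ℝ) T := ⟨hB.le, h⟩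
  have := hbound _ hmem
  have heq : k * (1 / k * L 0 ^ p) = L 0 ^ p := by
    field_simp
  rw [heq] at this
  exact lt_irrefl _ this
end

section
/- Let (Ω, μ) be a measure space with μ(Ω) < ∞, let q > 1 and m > 0 be real numbers, and let u : Ω → ℝ be measurable with x ↦ |u(x)|^{(q−1+m)·q/(q−1)} integrable on Ω. Then the function x ↦ ( |u(x)|^{q−1} · |ln|u(x)|| )^{q/(q−1)} (defined to be 0 where u(x) = 0) is integrable on Ω, and ∫_Ω ( |u(x)|^{q−1} · |ln|u(x)|| )^{q/(q−1)} dμ ≤ (e·m)^{−q/(q−1)} · ∫_Ω |u(x)|^{(q−1+m)·q/(q−1)} dμ + (e·(q−1))^{−q/(q−1)} · μ(Ω). -/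
open MeasureTheory

private lemma log_le_div_e {t : ℝ} (ht : 0 < t) : Real.log t ≤ t / Real.exp 1 := by
  have h := Real.log_le_sub_one_of_pos (div_pos ht (Real.exp_pos 1))
  rw [Real.log_div (ne_of_gt ht) (Real.exp_ne_zero 1), Real.log_exp] at h
  linarith

private lemma log_le_rpow_div {s b : ℝ} (hs : 0 < s) (hb : 0 < b) :
    Real.log b ≤ b ^ s / (Real.exp 1 * s) := by
  have h1 : Real.log (b ^ s) ≤ b ^ s / Real.exp 1 :=
    log_le_div_e (Real.rpow_pos_of_pos hb s)
  rw [Real.log_rpow hb] at h1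
  rw [← div_div]
  exact (le_div_iff₀ hs).mpr (by rw [mul_comm] at h1; linarith)

private lemma pointwise_est (q m : ℝ) (hq : 1 < q) (hm : 0 < m) (a : ℝ) (ha : 0 ≤ a) :
    (a ^ (q - 1) * |Real.log a|) ^ (q / (q - 1)) ≤
      (Real.exp 1 * m) ^ (-(q / (q - 1))) * a ^ ((q - 1 + m) * q / (q - 1)) +
        (Real.exp 1 * (q - 1)) ^ (-(q / (q - 1))) := by
  have hs : 0 < q - 1 := by linarith
  have hr : 0 < q / (q - 1) := div_pos (by linarith) hs
  have hem : 0 < Real.exp 1 * m := mul_pos (Real.exp_pos 1) hm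
  have hes : 0 < Real.exp 1 * (q - 1) := mul_pos (Real.exp_pos 1) hs
  have hc2 : (0:ℝ) < (Real.exp 1 * (q - 1)) ^ (-(q / (q - 1))) := Real.rpow_pos_of_pos hes _
  rcases eq_or_lt_of_le ha with rfl | ha
  · rw [Real.zero_rpow (ne_of_gt hs), zero_mul, Real.zero_rpow (ne_of_gt hr),
      Real.zero_rpow (by positivity), mul_zero, zero_add]
    exact le_of_lt hc2
  rcases le_or_gt 1 a with h1 | h1
  · -- case a ≥ 1
    have hlog : 0 ≤ Real.log a := Real.log_nonneg h1
    have key : a ^ (q - 1) * |Real.log a| ≤ a ^ (q - 1 + m) / (Real.exp 1 * m) := by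
      rw [abs_of_nonneg hlog, Real.rpow_add ha]
      calc a ^ (q-1) * Real.log a ≤ a ^ (q-1) * (a ^ m / (Real.exp 1 * m)) := by
            apply mul_le_mul_of_nonneg_left (log_le_rpow_div hm ha)
              (Real.rpow_nonneg ha.le _)
        _ = a ^ (q-1) * a ^ m / (Real.exp 1 * m) := by ring
    have key2 := Real.rpow_le_rpow (by positivity) key hr.le
    calc (a ^ (q - 1) * |Real.log a|) ^ (q / (q - 1)) ≤
          (a ^ (q - 1 + m) / (Real.exp 1 * m)) ^ (q / (q - 1)) := key2
      _ = (Real.exp 1 * m) ^ (-(q / (q - 1))) * a ^ ((q - 1 + m) * q / (q - 1)) := by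
          rw [Real.div_rpow (Real.rpow_nonneg ha.le _) hem.le, Real.rpow_neg hem.le,
            mul_div_assoc, Real.rpow_mul ha.le]
          ring
      _ ≤ _ := le_add_of_nonneg_right hc2.le
  · -- case a < 1
    have hlog : Real.log a ≤ 0 := Real.log_nonpos ha.le h1.le
    have key : a ^ (q - 1) * |Real.log a| ≤ 1 / (Real.exp 1 * (q - 1)) := by
      rw [abs_of_nonpos hlog, ← Real.log_inv]
      calc a ^ (q-1) * Real.log a⁻¹ ≤ a ^ (q-1) * ((a⁻¹) ^ (q-1) / (Real.exp 1 * (q-1))) :=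
            mul_le_mul_of_nonneg_left (log_le_rpow_div hs (inv_pos.mpr ha))
              (Real.rpow_nonneg ha.le _)
        _ = a ^ (q-1) * (a⁻¹) ^ (q-1) / (Real.exp 1 * (q-1)) := by ring
        _ = 1 / (Real.exp 1 * (q - 1)) := by
            rw [← Real.mul_rpow ha.le (inv_nonneg.mpr ha.le), mul_inv_cancel₀ (ne_of_gt ha),
              Real.one_rpow]
    have key2 := Real.rpow_le_rpow (by positivity) key hr.le
    calc (a ^ (q - 1) * |Real.log a|) ^ (q / (q - 1)) ≤
          (1 / (Real.exp 1 * (q - 1))) ^ (q / (q - 1)) := key2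
      _ = (Real.exp 1 * (q - 1)) ^ (-(q / (q - 1))) := by
          rw [one_div, Real.inv_rpow hes.le, ← Real.rpow_neg hes.le]
      _ ≤ _ := le_add_of_nonneg_left (by positivity)

theorem log_nonlinearity_dual_estimate {Ω : Type*} [MeasurableSpace Ω] (μ : Measure Ω)
    [IsFiniteMeasure μ] (q m : ℝ) (hq : 1 < q) (hm : 0 < m) (u : Ω → ℝ)
    (hu : Measurable u)
    (hint : Integrable (fun x => |u x| ^ ((q - 1 + m) * q / (q - 1))) μ) :
    Integrable (fun x => (|u x| ^ (q - 1) * abs (Real.log |u x|)) ^ (q / (q - 1))) μ ∧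
      ∫ x, (|u x| ^ (q - 1) * abs (Real.log |u x|)) ^ (q / (q - 1)) ∂μ ≤
        (Real.exp 1 * m) ^ (-(q / (q - 1))) *
            ∫ x, |u x| ^ ((q - 1 + m) * q / (q - 1)) ∂μ +
          (Real.exp 1 * (q - 1)) ^ (-(q / (q - 1))) * (μ Set.univ).toReal := by
  set c1 := (Real.exp 1 * m) ^ (-(q / (q - 1))) with hc1
  set c2 := (Real.exp 1 * (q - 1)) ^ (-(q / (q - 1))) with hc2
  have hg : Integrable (fun x => c1 * |u x| ^ ((q - 1 + m) * q / (q - 1)) + c2) μ :=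
    (hint.const_mul c1).add (integrable_const c2)
  have hpt : ∀ x, (|u x| ^ (q - 1) * abs (Real.log |u x|)) ^ (q / (q - 1)) ≤
      c1 * |u x| ^ ((q - 1 + m) * q / (q - 1)) + c2 :=
    fun x => pointwise_est q m hq hm _ (abs_nonneg _)
  have hnn : ∀ x, 0 ≤ (|u x| ^ (q - 1) * abs (Real.log |u x|)) ^ (q / (q - 1)) := by
    intro x; positivity
  have hmeas : Measurable fun x => (|u x| ^ (q - 1) * abs (Real.log |u x|)) ^ (q / (q - 1)) :=
    ((hu.abs.pow measurable_const).mul ((Real.measurable_log.comp hu.abs).abs)).pow measurable_const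
  have hf : Integrable (fun x => (|u x| ^ (q - 1) * abs (Real.log |u x|)) ^ (q / (q - 1))) μ := by
    refine hg.mono' hmeas.aestronglyMeasurable ?_
    filter_upwards with x
    rw [Real.norm_eq_abs, abs_of_nonneg (hnn x)]
    exact hpt x
  refine ⟨hf, ?_⟩
  calc ∫ x, (|u x| ^ (q - 1) * abs (Real.log |u x|)) ^ (q / (q - 1)) ∂μ ≤
        ∫ x, (c1 * |u x| ^ ((q - 1 + m) * q / (q - 1)) + c2) ∂μ :=
        integral_mono hf hg hpt
    _ = c1 * ∫ x, |u x| ^ ((q - 1 + m) * q / (q - 1)) ∂μ + c2 * (μ Set.univ).toReal := by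
        rw [integral_add (hint.const_mul c1) (integrable_const c2), integral_const_mul,
          integral_const, Measure.real, smul_eq_mul, mul_comm]
        ring
end
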